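/- For fixed x ≥ 0, the gap for user 1 is nondecreasing in the channel gain: if 0 < g₁ ≤ g₂ and cᵢ = 1/(gᵢ+1) for i = 1, 2, then h_{c₂}(x) ≤ h_{c₁}(x), and hence (1/2)·log₂(1 + x) − h_{c₁}(x) ≤ (1/2)·log₂(1 + x) − h_{c₂}(x). -/

import Mathlib

open Real

private lemma phi_strictAnti : StrictAntiOn (fun t : ℝ => t - t * Real.log t) (Set.Ici 1) := by
  apply strictAntiOn_of_deriv_neg (convex_Ici 1)
  · have hsub : Set.Ici (1:ℝ) ⊆ {0}ᶜ := fun x hx => by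
      simp only [Set.mem_compl_iff, Set.mem_singleton_iff]
      intro h
      rw [Set.mem_Ici, h] at hx
      norm_num at hx
    exact continuousOn_id.sub (continuousOn_id.mul (Real.continuousOn_log.mono hsub))
  · intro t ht
    rw [interior_Ici] at ht
    have ht1 : (1:ℝ) < t := ht
    have ht0 : t ≠ 0 := by linarith
    have hd : HasDerivAt (fun t : ℝ => t - t * Real.log t) (1 - (1 * Real.log t + t * t⁻¹)) t :=
      (hasDerivAt_id t).sub ((hasDerivAt_id t).mul (Real.hasDerivAt_log ht0))
    have : (1 : ℝ) - (1 * Real.log t + t * t⁻¹) = -Real.log t := by field_simp; ring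
    rw [hd.deriv, this]
    simp only [neg_neg, Left.neg_neg_iff]
    exact Real.log_pos ht1

/-- Monotonicity of the user-1 gap in the channel gain: for fixed `x ≥ 0`, if
`0 < g₁ ≤ g₂` with `cᵢ = 1/(gᵢ+1)` and `h_{cᵢ}` the corresponding envelope functions,
then `h_{c₂} x ≤ h_{c₁} x`, hence
`(1/2) log₂ (1+x) − h_{c₁} x ≤ (1/2) log₂ (1+x) − h_{c₂} x`. -/
theorem stmt_10 (g1 g2 : ℝ) (hg1 : 0 < g1) (hg12 : g1 ≤ g2)
    (c1 c2 : ℝ) (hc1 : c1 = 1 / (g1 + 1)) (hc2 : c2 = 1 / (g2 + 1))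
    (xs1 : ℝ) (hxs1 : 0 < xs1) (heq1 : Real.log (xs1 + c1) = xs1 / (xs1 + c1))
    (xs2 : ℝ) (hxs2 : 0 < xs2) (heq2 : Real.log (xs2 + c2) = xs2 / (xs2 + c2))
    (h1 h2 : ℝ → ℝ)
    (h1lin : ∀ x : ℝ, 0 ≤ x → x ≤ xs1 → h1 x = x / (2 * Real.log 2 * (xs1 + c1)))
    (h1log : ∀ x : ℝ, xs1 ≤ x → h1 x = (1 / 2) * Real.logb 2 (x + c1))
    (h2lin : ∀ x : ℝ, 0 ≤ x → x ≤ xs2 → h2 x = x / (2 * Real.log 2 * (xs2 + c2)))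
    (h2log : ∀ x : ℝ, xs2 ≤ x → h2 x = (1 / 2) * Real.logb 2 (x + c2)) :
    ∀ x : ℝ, 0 ≤ x →
      h2 x ≤ h1 x ∧
      (1 / 2) * Real.logb 2 (1 + x) - h1 x ≤ (1 / 2) * Real.logb 2 (1 + x) - h2 x := by
  have hl2 : 0 < Real.log 2 := Real.log_pos one_lt_two
  have hc1pos : 0 < c1 := by rw [hc1]; positivity
  have hc2pos : 0 < c2 := by rw [hc2]; exact div_pos one_pos (by linarith)
  have hc21 : c2 ≤ c1 := by
    rw [hc1, hc2]
    apply one_div_le_one_div_of_le <;> linarith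
  have ht1pos : 0 < xs1 + c1 := by linarith
  have ht2pos : 0 < xs2 + c2 := by linarith
  have ht1 : 1 < xs1 + c1 := by
    have : 0 < Real.log (xs1 + c1) := by rw [heq1]; exact div_pos hxs1 ht1pos
    exact (Real.log_pos_iff ht1pos.le).mp this
  have ht2 : 1 < xs2 + c2 := by
    have : 0 < Real.log (xs2 + c2) := by rw [heq2]; exact div_pos hxs2 ht2pos
    exact (Real.log_pos_iff ht2pos.le).mp this
  have hxseq1 : xs1 = (xs1 + c1) * Real.log (xs1 + c1) := by
    rw [heq1]; field_simp
  have hxseq2 : xs2 = (xs2 + c2) * Real.log (xs2 + c2) := by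
    rw [heq2]; field_simp
  have hceq1 : c1 = (xs1 + c1) - (xs1 + c1) * Real.log (xs1 + c1) := by linarith
  have hceq2 : c2 = (xs2 + c2) - (xs2 + c2) * Real.log (xs2 + c2) := by linarith
  -- t1 ≤ t2
  have ht12 : xs1 + c1 ≤ xs2 + c2 := by
    by_contra h
    push_neg at h
    have := phi_strictAnti (Set.mem_Ici.mpr ht2.le) (Set.mem_Ici.mpr ht1.le) h
    simp only at this
    rw [← hceq1, ← hceq2] at this
    linarith
  -- xs1 ≤ xs2
  have hxs12 : xs1 ≤ xs2 := by
    rw [hxseq1, hxseq2]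
    apply mul_le_mul ht12 (Real.log_le_log ht1pos ht12) (Real.log_nonneg ht1.le) (by linarith)
  intro x hx
  suffices hmain : h2 x ≤ h1 x from ⟨hmain, by linarith⟩
  rcases le_or_gt x xs1 with hA | hA
  · -- both linear
    rw [h1lin x hx hA, h2lin x hx (hA.trans hxs12)]
    gcongr
  · rw [h1log x hA.le]
    rcases le_or_gt xs2 x with hB | hB
    · -- both log
      rw [h2log x hB]
      gcongr
      all_goals first | exact one_lt_two | linarith
    · -- middle region: h2 linear, h1 log
      rw [h2lin x hx hB.le]
      have hd : 0 < xs2 - xs1 := by linarith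
      set wb := (x - xs1) / (xs2 - xs1) with hwb
      set wa := (xs2 - x) / (xs2 - xs1) with hwa
      have hwa0 : 0 ≤ wa := div_nonneg (by linarith) (by linarith)
      have hwb0 : 0 ≤ wb := div_nonneg (by linarith) (by linarith)
      have hsum : wa + wb = 1 := by rw [hwa, hwb]; field_simp; ring
      have hcomb : wa * (xs1 + c1) + wb * (xs2 + c1) = x + c1 := by
        rw [hwa, hwb]; field_simp; ring
      have hconc := strictConcaveOn_log_Ioi.concaveOn.2
        (Set.mem_Ioi.mpr ht1pos) (Set.mem_Ioi.mpr (by linarith : (0:ℝ) < xs2 + c1))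
        hwa0 hwb0 hsum
      simp only [smul_eq_mul] at hconc
      rw [hcomb] at hconc
      have hla : xs1 / (xs2 + c2) ≤ Real.log (xs1 + c1) := by
        rw [heq1]
        apply div_le_div_of_nonneg_left hxs1.le ht1pos ht12
      have hlb : xs2 / (xs2 + c2) ≤ Real.log (xs2 + c1) := by
        rw [← heq2]
        exact Real.log_le_log ht2pos (by linarith)
      have hxcomb : wa * xs1 + wb * xs2 = x := by
        rw [hwa, hwb]; field_simp; ring
      have key : x / (xs2 + c2) ≤ Real.log (x + c1) := by
        have h1' : wa * (xs1 / (xs2 + c2)) ≤ wa * Real.log (xs1 + c1) :=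
          mul_le_mul_of_nonneg_left hla hwa0
        have h2' : wb * (xs2 / (xs2 + c2)) ≤ wb * Real.log (xs2 + c1) :=
          mul_le_mul_of_nonneg_left hlb hwb0
        have : x / (xs2 + c2) = wa * (xs1 / (xs2 + c2)) + wb * (xs2 / (xs2 + c2)) := by
          rw [← hxcomb]; ring
        linarith
      calc x / (2 * Real.log 2 * (xs2 + c2)) = (x / (xs2 + c2)) / (2 * Real.log 2) := by
            rw [div_div]; ring_nf
        _ ≤ Real.log (x + c1) / (2 * Real.log 2) := by gcongr
        _ = 1 / 2 * Real.logb 2 (x + c1) := by rw [Real.logb]; ring
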